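/- arXiv:1410.5167 — 2 statements merged into one kernel-verified Lean document; each statement's English description precedes it below -/
import Mathlib

section
/- Let Ω ⊂ X be a nonempty bounded open set with C_p(X∖Ω) > 0, let E ⊂ Ω with cap_p(E,Ω) < ∞, let u_E be the Cheeger capacitary potential of E in Ω and ν_E = Tu_E the associated capacitary measure. Then ∫_Ω φ dν_E = 0 for every φ ∈ N^{1,p}_0(Ω∖E). -/
open MeasureTheory Metric Set Filter Topology
open scoped ENNReal NNReal

noncomputable section

namespace FinePotential

/-- A (nonconstant, compact, rectifiable) curve in `Y`, parameterized by arc length,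
modeled as a `1`-Lipschitz map on `[0, l]`. -/
structure Curve (Y : Type*) [PseudoMetricSpace Y] where
  l : ℝ
  l_pos : 0 < l
  toFun : ℝ → Y
  lip : LipschitzOnWith 1 toFun (Set.Icc 0 l)
  nonconst : ∃ s ∈ Set.Icc (0 : ℝ) l, ∃ t ∈ Set.Icc (0 : ℝ) l, toFun s ≠ toFun t

section General

variable {Y : Type*} [PseudoMetricSpace Y] [MeasurableSpace Y]

/-- The line integral `∫_γ g ds` along an arc-length parameterized curve. -/
def curveIntegral (γ : Curve Y) (g : Y → ℝ≥0∞) : ℝ≥0∞ :=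
  ∫⁻ t in Set.Icc 0 γ.l, g (γ.toFun t)

/-- `g` is an upper gradient of `f`. -/
def IsUpperGradient (f : Y → ℝ) (g : Y → ℝ≥0∞) : Prop :=
  Measurable g ∧ ∀ γ : Curve Y,
    ENNReal.ofReal |f (γ.toFun 0) - f (γ.toFun γ.l)| ≤ curveIntegral γ g

/-- The curve family `Γ` has zero `p`-modulus. -/
def ZeroPModulus (p : ℝ) (μ : Measure Y) (Γ : Set (Curve Y)) : Prop :=
  ∃ ρ : Y → ℝ≥0∞, Measurable ρ ∧ (∫⁻ y, ρ y ^ p ∂μ) ≠ ∞ ∧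
    ∀ γ ∈ Γ, curveIntegral γ ρ = ∞

/-- `g` is a `p`-weak upper gradient of `f`. -/
def IsWeakUpperGradient (p : ℝ) (μ : Measure Y) (f : Y → ℝ) (g : Y → ℝ≥0∞) : Prop :=
  Measurable g ∧ ∃ Γ : Set (Curve Y), ZeroPModulus p μ Γ ∧
    ∀ γ ∉ Γ, ENNReal.ofReal |f (γ.toFun 0) - f (γ.toFun γ.l)| ≤ curveIntegral γ g

/-- Membership in the Newtonian space `N^{1,p}(Y, μ)`. -/
def MemN1p (p : ℝ) (μ : Measure Y) (f : Y → ℝ) : Prop :=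
  Measurable f ∧ (∫⁻ y, ENNReal.ofReal |f y| ^ p ∂μ) ≠ ∞ ∧
    ∃ g, IsUpperGradient f g ∧ (∫⁻ y, g y ^ p ∂μ) ≠ ∞

/-- The `p`-th power `‖f‖_{N^{1,p}}^p` of the Newtonian norm. -/
def n1pNormP (p : ℝ) (μ : Measure Y) (f : Y → ℝ) : ℝ≥0∞ :=
  (∫⁻ y, ENNReal.ofReal |f y| ^ p ∂μ) +
    ⨅ (g : Y → ℝ≥0∞) (_ : IsUpperGradient f g), ∫⁻ y, g y ^ p ∂μ

/-- The energy `∫ g_f^p dμ` of the minimal `p`-weak upper gradient of `f`. -/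
def weakGradEnergy (p : ℝ) (μ : Measure Y) (f : Y → ℝ) : ℝ≥0∞ :=
  ⨅ (g : Y → ℝ≥0∞) (_ : IsWeakUpperGradient p μ f g), ∫⁻ y, g y ^ p ∂μ

/-- The Sobolev capacity `C_p`. -/
def sobolevCapacity (p : ℝ) (μ : Measure Y) (E : Set Y) : ℝ≥0∞ :=
  ⨅ (f : Y → ℝ) (_ : MemN1p p μ f) (_ : ∀ x ∈ E, 1 ≤ f x), n1pNormP p μ f

/-- Membership in the Dirichlet space `D^p(Y, μ)`. -/
def MemDp (p : ℝ) (μ : Measure Y) (f : Y → ℝ) : Prop :=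
  Measurable f ∧ ∃ g, IsUpperGradient f g ∧ (∫⁻ y, g y ^ p ∂μ) ≠ ∞

/-- `g` is the minimal `p`-weak upper gradient of `f`: it is a `p`-weak upper gradient
and it is `≤` a.e. than every locally `p`-integrable `p`-weak upper gradient. -/
def IsMinimalWeakUpperGradient (p : ℝ) (μ : Measure Y) (f : Y → ℝ) (g : Y → ℝ≥0∞) : Prop :=
  IsWeakUpperGradient p μ f g ∧
    ∀ h : Y → ℝ≥0∞, IsWeakUpperGradient p μ f h →
      (∀ y : Y, ∃ r : ℝ, 0 < r ∧ (∫⁻ z in Metric.ball y r, h z ^ p ∂μ) ≠ ∞) →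
      ∀ᵐ y ∂μ, g y ≤ h y

end General

section MetricDefs

variable {X : Type*} [MetricSpace X] [MeasurableSpace X]

/-- `N^{1,p}(A)`, for `A ⊆ X`, with `(A, d|_A, μ|_A)` as the underlying metric
measure space. -/
def MemN1pOn (p : ℝ) (μ : Measure X) (A : Set X) (f : X → ℝ) : Prop :=
  MemN1p p (μ.comap (Subtype.val : A → X)) (fun y : A => f ↑y)

/-- `u ∈ D^p_loc(X)`: every point has a ball on which `u` belongs to the Dirichlet
space of the ball. -/
def MemDpLoc (p : ℝ) (μ : Measure X) (f : X → ℝ) : Prop :=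
  ∀ x : X, ∃ r : ℝ, 0 < r ∧
    MemDp p (μ.comap (Subtype.val : Metric.ball x r → X))
      (fun y : Metric.ball x r => f ↑y)

/-- `N^{1,p}_0(A)`: Newtonian functions (extended by zero) vanishing outside `A`. -/
def MemN1p0 (p : ℝ) (μ : Measure X) (A : Set X) (f : X → ℝ) : Prop :=
  MemN1p p μ f ∧ ∀ x ∉ A, f x = 0

/-- `u ∈ N^{1,p}_loc(Ω)`. -/
def MemN1pLocOn (p : ℝ) (μ : Measure X) (Ω : Set X) (f : X → ℝ) : Prop :=
  ∀ x ∈ Ω, ∃ r : ℝ, 0 < r ∧ MemN1pOn p μ (Metric.ball x r ∩ Ω) f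

/-- The variational capacity `cap_p(E, Ω)`. -/
def varCap (p : ℝ) (μ : Measure X) (E Ω : Set X) : ℝ≥0∞ :=
  ⨅ (f : X → ℝ) (_ : MemN1p0 p μ Ω f) (_ : ∀ x ∈ E, 1 ≤ f x), weakGradEnergy p μ f

/-- The integrand in the Wiener-type definition of thinness, with the convention
that it equals `1` whenever `cap_p(B(x,r), B(x,2r)) = 0`. -/
def thinIntegrand (p : ℝ) (μ : Measure X) (E : Set X) (x : X) (r : ℝ) : ℝ≥0∞ :=
  if varCap p μ (Metric.ball x r) (Metric.ball x (2 * r)) = 0 then 1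
  else (varCap p μ (E ∩ Metric.ball x r) (Metric.ball x (2 * r)) /
      varCap p μ (Metric.ball x r) (Metric.ball x (2 * r))) ^ (1 / (p - 1))

/-- `E` is thin at `x`. -/
def IsThinAt (p : ℝ) (μ : Measure X) (E : Set X) (x : X) : Prop :=
  (∫⁻ r in Set.Ioc (0 : ℝ) 1, thinIntegrand p μ E x r * ENNReal.ofReal (1 / r)) ≠ ∞

/-- `U` is finely open: its complement is thin at every point of `U`. -/
def FinelyOpen (p : ℝ) (μ : Measure X) (U : Set X) : Prop :=
  ∀ x ∈ U, IsThinAt p μ Uᶜ x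

/-- The base `b_p E`: the set of points where `E` is thick (not thin). -/
def pBase (p : ℝ) (μ : Measure X) (E : Set X) : Set X :=
  {x : X | ¬ IsThinAt p μ E x}

/-- `U` is quasiopen. -/
def Quasiopen (p : ℝ) (μ : Measure X) (U : Set X) : Prop :=
  ∀ ε : ℝ≥0∞, 0 < ε → ∃ G : Set X, IsOpen G ∧ sobolevCapacity p μ G < ε ∧ IsOpen (G ∪ U)

/-- `u` is quasicontinuous on `E`. -/
def QuasicontinuousOn (p : ℝ) (μ : Measure X) (E : Set X) (u : X → EReal) : Prop :=
  ∀ ε : ℝ≥0∞, 0 < ε → ∃ G : Set X, IsOpen G ∧ sobolevCapacity p μ G < ε ∧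
    (∀ x ∈ E \ G, u x ≠ ⊤ ∧ u x ≠ ⊥) ∧ ContinuousOn u (E \ G)

/-- The fine topology: the topology generated by the finely open sets (which form
a topology). -/
def fineTopology (p : ℝ) (μ : Measure X) : TopologicalSpace X :=
  TopologicalSpace.generateFrom {U : Set X | FinelyOpen p μ U}

/-- `u` is finely continuous on `s`, i.e. continuous on `s` from the fine topology
to the usual topology of `[-∞, ∞]`. -/
def FinelyContinuousOn (p : ℝ) (μ : Measure X) (u : X → EReal) (s : Set X) : Prop :=
  @ContinuousOn X EReal (fineTopology p μ) inferInstance u s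

/-- The fine closure of `E`. -/
def fineClosure (p : ℝ) (μ : Measure X) (E : Set X) : Set X :=
  @closure X (fineTopology p μ) E

/-- The fine interior of `E`. -/
def fineInterior (p : ℝ) (μ : Measure X) (E : Set X) : Set X :=
  @interior X (fineTopology p μ) E

/-- The fine boundary `∂_p E` of `E`. -/
def fineBoundary (p : ℝ) (μ : Measure X) (E : Set X) : Set X :=
  fineClosure p μ E \ fineInterior p μ E

/-- `μ` is a doubling measure giving finite positive mass to all balls. -/
def IsDoubling (μ : Measure X) : Prop :=
  (∀ (x : X) (r : ℝ), 0 < r → 0 < μ (Metric.ball x r) ∧ μ (Metric.ball x r) < ∞) ∧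
    ∃ C : ℝ, 0 < C ∧ ∀ (x : X) (r : ℝ), 0 < r →
      μ (Metric.ball x (2 * r)) ≤ ENNReal.ofReal C * μ (Metric.ball x r)

/-- `X` supports a `p`-Poincaré inequality. -/
def SupportsPoincare (p : ℝ) (μ : Measure X) : Prop :=
  ∃ C : ℝ, 0 < C ∧ ∃ lam : ℝ, 1 ≤ lam ∧
    ∀ (x : X) (r : ℝ), 0 < r → ∀ f : X → ℝ, LocallyIntegrable f μ →
      ∀ g : X → ℝ≥0∞, IsUpperGradient f g →
        (μ (Metric.ball x r))⁻¹ *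
            (∫⁻ y in Metric.ball x r,
              ENNReal.ofReal |f y - ⨍ z in Metric.ball x r, f z ∂μ| ∂μ) ≤
          ENNReal.ofReal (C * Metric.diam (Metric.ball x r)) *
            ((μ (Metric.ball x (lam * r)))⁻¹ *
              ∫⁻ y in Metric.ball x (lam * r), g y ^ p ∂μ) ^ (1 / p)

/-- The property `P` holds quasieverywhere on `E`. -/
def QeOn (p : ℝ) (μ : Measure X) (E : Set X) (P : X → Prop) : Prop :=
  sobolevCapacity p μ {x ∈ E | ¬ P x} = 0

/-- `u` is lsc-regularized on `Ω`: `u(x) = ess liminf_{y → x} u(y)` for `x ∈ Ω`. -/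
def LscRegularized (μ : Measure X) (Ω : Set X) (u : X → ℝ) : Prop :=
  ∀ x ∈ Ω, Tendsto
    (fun r : ℝ => essInf (fun y => (u y : EReal)) (μ.restrict (Metric.ball x r)))
    (𝓝[>] (0 : ℝ)) (𝓝 (u x : EReal))

end MetricDefs

/-- A Cheeger differentiable structure on `X`: a measurable vector-valued gradient
`D`, linear in the function, together with pointwise inner products whose norms are
comparable to the minimal `p`-weak upper gradient. -/
structure CheegerStructure (X : Type*) [MetricSpace X] [MeasurableSpace X]
    (p : ℝ) (μ : Measure X) where
  N : ℕ
  D : (X → ℝ) → X → (Fin N → ℝ)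
  inn : X → (Fin N → ℝ) → (Fin N → ℝ) → ℝ
  inn_symm : ∀ x v w, inn x v w = inn x w v
  inn_add_left : ∀ x u v w, inn x (u + v) w = inn x u w + inn x v w
  inn_smul_left : ∀ (x : X) (c : ℝ) (v w : Fin N → ℝ), inn x (c • v) w = c * inn x v w
  inn_nonneg : ∀ x v, 0 ≤ inn x v v
  D_add : ∀ f g : X → ℝ, D (f + g) = fun x => D f x + D g x
  D_smul : ∀ (c : ℝ) (f : X → ℝ), D (fun x => c * f x) = fun x => c • D f x
  measurable_inn_D : ∀ f g : X → ℝ, Measurable f → Measurable g →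
    Measurable fun x => inn x (D f x) (D g x)
  comparable : ∃ C : ℝ, 0 < C ∧ ∀ f : X → ℝ, MemN1p p μ f →
    IsWeakUpperGradient p μ f
      (fun x => ENNReal.ofReal (C * Real.sqrt (inn x (D f x) (D f x)))) ∧
    ∀ g : X → ℝ≥0∞, IsWeakUpperGradient p μ f g →
      ∀ᵐ x ∂μ, ENNReal.ofReal (Real.sqrt (inn x (D f x) (D f x))) ≤ ENNReal.ofReal C * g x

section Cheeger

variable {X : Type*} [MetricSpace X] [MeasurableSpace X] {p : ℝ} {μ : Measure X}

/-- The inner product norm `|v|_x`. -/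
def CheegerStructure.normAt (S : CheegerStructure X p μ) (x : X) (v : Fin S.N → ℝ) : ℝ :=
  Real.sqrt (S.inn x v v)

/-- The form `(u, φ) ↦ ∫_Ω |Du|^{p-2} Du · Dφ dμ`. -/
def cheegerForm (S : CheegerStructure X p μ) (Ω : Set X) (u φ : X → ℝ) : ℝ :=
  ∫ x in Ω, S.normAt x (S.D u x) ^ (p - 2) * S.inn x (S.D u x) (S.D φ x) ∂μ

/-- The Cheeger `p`-energy `∫_Ω |Du|^p dμ`. -/
def cheegerEnergy (S : CheegerStructure X p μ) (Ω : Set X) (u : X → ℝ) : ℝ≥0∞ :=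
  ∫⁻ x in Ω, ENNReal.ofReal (S.normAt x (S.D u x) ^ p) ∂μ

/-- `φ ∈ Lip_c(Ω)`. -/
def MemLipc (Ω : Set X) (φ : X → ℝ) : Prop :=
  (∃ K : ℝ≥0, LipschitzWith K φ) ∧ HasCompactSupport φ ∧ tsupport φ ⊆ Ω

/-- `u` is a (Cheeger) supersolution in `Ω`. -/
def IsSupersolution (S : CheegerStructure X p μ) (Ω : Set X) (u : X → ℝ) : Prop :=
  MemN1pLocOn p μ Ω u ∧
    ∀ φ : X → ℝ, MemLipc Ω φ → (∀ x, 0 ≤ φ x) → 0 ≤ cheegerForm S Ω u φ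

/-- `h` is the continuous Cheeger `p`-harmonic function in `Ω'` with Sobolev boundary
values `v`, i.e. the continuous solution of the `K_{-∞,v}(Ω')`-Cheeger obstacle
problem. -/
def IsDirichletSolution (S : CheegerStructure X p μ) (Ω' : Set X) (v h : X → ℝ) : Prop :=
  ContinuousOn h Ω' ∧ MemN1p0 p μ Ω' (h - v) ∧
    ∀ w : X → ℝ, MemN1p0 p μ Ω' (w - v) → cheegerEnergy S Ω' h ≤ cheegerEnergy S Ω' w

/-- `u` (real-valued) is Cheeger superharmonic in the open set `G`. -/
def CheegerSuperharmonicOn (S : CheegerStructure X p μ) (G : Set X) (u : X → ℝ) : Prop :=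
  LowerSemicontinuousOn u G ∧
    ∀ Ω' : Set X, Ω'.Nonempty → IsOpen Ω' → IsCompact (closure Ω') → closure Ω' ⊆ G →
      sobolevCapacity p μ Ω'ᶜ ≠ 0 →
      ∀ v : X → ℝ, (∃ K : ℝ≥0, LipschitzWith K v) → (∀ x ∈ frontier Ω', v x ≤ u x) →
        ∀ h : X → ℝ, IsDirichletSolution S Ω' v h → ∀ x ∈ Ω', h x ≤ u x

/-- `u` is the Cheeger capacitary potential of `E` in `Ω`: the lsc-regularized
minimizer of the Cheeger `p`-energy among functions in `N^{1,p}_0(Ω)` that are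
`≥ 1` q.e. on `E`. -/
def IsCapacitaryPotential (S : CheegerStructure X p μ) (E Ω : Set X) (u : X → ℝ) : Prop :=
  MemN1p0 p μ Ω u ∧ QeOn p μ E (fun x => 1 ≤ u x) ∧ LscRegularized μ Ω u ∧
    ∀ v : X → ℝ, MemN1p0 p μ Ω v → QeOn p μ E (fun x => 1 ≤ v x) →
      cheegerEnergy S Ω u ≤ cheegerEnergy S Ω v

/-- `ν` is a Radon measure on `Ω` belonging to the dual `N^{1,p}_0(Ω)'`. -/
def IsRadonInDual (p : ℝ) (μ : Measure X) (Ω : Set X) (ν : Measure X) : Prop :=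
  ν Ωᶜ = 0 ∧ (∀ K : Set X, IsCompact K → ν K ≠ ∞) ∧
    ∃ C : ℝ≥0∞, ∀ φ : X → ℝ, MemN1p0 p μ Ω φ →
      (∫⁻ x, ENNReal.ofReal |φ x| ∂ν) ≤ C * n1pNormP p μ φ ^ (1 / p)

/-- `ν = T u_E` is the capacitary measure associated with the capacitary potential
`u_E` in `Ω`. -/
def IsCapacitaryMeasure (S : CheegerStructure X p μ) (Ω : Set X) (uE : X → ℝ)
    (ν : Measure X) : Prop :=
  IsRadonInDual p μ Ω ν ∧
    ∀ φ : X → ℝ, MemN1p0 p μ Ω φ → cheegerForm S Ω uE φ = ∫ x, φ x ∂ν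

end Cheeger

section Helpers

variable {X : Type*} [MetricSpace X] [MeasurableSpace X] {p : ℝ} {μ : Measure X}

/-! ### Elementary capacity lemmas -/

theorem isUpperGradient_zero {Y : Type*} [PseudoMetricSpace Y] [MeasurableSpace Y] :
    IsUpperGradient (fun _ : Y => (0 : ℝ)) (fun _ => 0) := by
  refine ⟨measurable_const, fun γ => ?_⟩
  simp

theorem memN1p_zero {Y : Type*} [PseudoMetricSpace Y] [MeasurableSpace Y]
    (hp : 0 < p) (μ : Measure Y) : MemN1p p μ (fun _ => (0 : ℝ)) := by
  refine ⟨measurable_const, ?_, ⟨fun _ => 0, isUpperGradient_zero, ?_⟩⟩ <;>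
    simp [ENNReal.zero_rpow_of_pos hp]

theorem sobolevCapacity_empty (hp : 0 < p) :
    sobolevCapacity p μ (∅ : Set X) = 0 := by
  refine le_antisymm ?_ (zero_le)
  have h1 : n1pNormP p μ (fun _ => (0:ℝ)) = 0 := by
    have h2 : (⨅ (g : X → ℝ≥0∞) (_ : IsUpperGradient (fun _ : X => (0:ℝ)) g),
        ∫⁻ y, g y ^ p ∂μ) ≤ ∫⁻ y : X, (0 : ℝ≥0∞) ^ p ∂μ :=
      iInf₂_le (fun _ => 0) isUpperGradient_zero
    have h3 : (∫⁻ y : X, (0 : ℝ≥0∞) ^ p ∂μ) = 0 := by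
      simp [ENNReal.zero_rpow_of_pos hp]
    have h4 : (∫⁻ y : X, ENNReal.ofReal |(0:ℝ)| ^ p ∂μ) = 0 := by
      simp [ENNReal.zero_rpow_of_pos hp]
    refine le_antisymm ?_ (zero_le)
    rw [n1pNormP, h4, zero_add]
    exact h2.trans h3.le
  calc sobolevCapacity p μ (∅ : Set X)
      ≤ n1pNormP p μ (fun _ => (0:ℝ)) := by
        refine iInf₂_le_of_le (fun _ => 0) (memN1p_zero hp μ) ?_
        exact iInf_le_of_le (by simp) le_rfl
    _ = 0 := h1

theorem qeOn_of_forall (hp : 0 < p) {E : Set X} {P : X → Prop}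
    (h : ∀ x ∈ E, P x) : QeOn p μ E P := by
  have : {x ∈ E | ¬ P x} = ∅ := by
    ext x; simp only [Set.mem_setOf_eq, Set.mem_empty_iff_false, iff_false, not_and, not_not]
    exact fun hx => h x hx
  rw [QeOn, this, sobolevCapacity_empty hp]

end Helpers


section BilinearHelpers

variable {X : Type*} [MetricSpace X] [MeasurableSpace X] {p : ℝ} {μ : Measure X}
variable (S : CheegerStructure X p μ)

theorem inn_zero_left (x : X) (w : Fin S.N → ℝ) : S.inn x 0 w = 0 := by
  have h := S.inn_smul_left x 0 0 w
  simpa using h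

theorem inn_smul_right (x : X) (c : ℝ) (v w : Fin S.N → ℝ) :
    S.inn x v (c • w) = c * S.inn x v w := by
  rw [S.inn_symm, S.inn_smul_left, S.inn_symm]

theorem inn_add_right (x : X) (u v w : Fin S.N → ℝ) :
    S.inn x u (v + w) = S.inn x u v + S.inn x u w := by
  rw [S.inn_symm, S.inn_add_left, S.inn_symm x v u, S.inn_symm x w u]

theorem inn_expand (x : X) (u v : Fin S.N → ℝ) (s : ℝ) :
    S.inn x (u + s • v) (u + s • v) =
      S.inn x u u + 2 * s * S.inn x u v + s ^ 2 * S.inn x v v := by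
  simp only [S.inn_add_left, inn_add_right, S.inn_smul_left, inn_smul_right, S.inn_symm x v u]
  ring

theorem inn_add_smul_right (x : X) (u v : Fin S.N → ℝ) (s : ℝ) :
    S.inn x (u + s • v) v = S.inn x u v + s * S.inn x v v := by
  rw [S.inn_add_left, S.inn_smul_left]

theorem inn_cauchy_schwarz (x : X) (u v : Fin S.N → ℝ) :
    S.inn x u v ^ 2 ≤ S.inn x u u * S.inn x v v := by
  have h : ∀ t : ℝ, 0 ≤ S.inn x v v * (t * t) + (2 * S.inn x u v) * t + S.inn x u u := by
    intro t
    have := S.inn_nonneg x (u + t • v)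
    rw [inn_expand] at this
    nlinarith [this]
  have hd := discrim_le_zero h
  rw [discrim] at hd
  nlinarith [hd]

theorem normAt_nonneg (x : X) (v : Fin S.N → ℝ) : 0 ≤ S.normAt x v :=
  Real.sqrt_nonneg _

theorem normAt_sq (x : X) (v : Fin S.N → ℝ) : S.normAt x v ^ 2 = S.inn x v v :=
  Real.sq_sqrt (S.inn_nonneg x v)

theorem abs_inn_le (x : X) (u v : Fin S.N → ℝ) :
    |S.inn x u v| ≤ S.normAt x u * S.normAt x v := by
  have h := inn_cauchy_schwarz S x u v
  have h2 : |S.inn x u v| = Real.sqrt (S.inn x u v ^ 2) := (Real.sqrt_sq_eq_abs _).symm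
  rw [h2]
  calc Real.sqrt (S.inn x u v ^ 2) ≤ Real.sqrt (S.inn x u u * S.inn x v v) :=
        Real.sqrt_le_sqrt h
    _ = S.normAt x u * S.normAt x v := Real.sqrt_mul (S.inn_nonneg x u) _

theorem inn_le_normAt_mul (x : X) (u v : Fin S.N → ℝ) :
    S.inn x u v ≤ S.normAt x u * S.normAt x v :=
  (le_abs_self _).trans (abs_inn_le S x u v)

theorem normAt_add_le (x : X) (u v : Fin S.N → ℝ) :
    S.normAt x (u + v) ≤ S.normAt x u + S.normAt x v := by
  have h1 : S.inn x (u + v) (u + v) ≤ (S.normAt x u + S.normAt x v) ^ 2 := by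
    have := inn_expand S x u v 1
    simp only [one_smul, mul_one, one_pow] at this
    rw [this]
    have h2 := inn_le_normAt_mul S x u v
    have h3 := normAt_sq S x u
    have h4 := normAt_sq S x v
    nlinarith
  calc S.normAt x (u + v) = Real.sqrt (S.inn x (u + v) (u + v)) := rfl
    _ ≤ Real.sqrt ((S.normAt x u + S.normAt x v) ^ 2) := Real.sqrt_le_sqrt h1
    _ = |S.normAt x u + S.normAt x v| := Real.sqrt_sq_eq_abs _
    _ = S.normAt x u + S.normAt x v :=
        abs_of_nonneg (add_nonneg (normAt_nonneg S x u) (normAt_nonneg S x v))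

theorem normAt_smul (x : X) (c : ℝ) (v : Fin S.N → ℝ) :
    S.normAt x (c • v) = |c| * S.normAt x v := by
  have : S.inn x (c • v) (c • v) = c ^ 2 * S.inn x v v := by
    rw [S.inn_smul_left, inn_smul_right]; ring
  unfold CheegerStructure.normAt
  rw [this, Real.sqrt_mul (sq_nonneg c), Real.sqrt_sq_eq_abs]

theorem normAt_rpow (x : X) (v : Fin S.N → ℝ) (c : ℝ) :
    S.normAt x v ^ c = S.inn x v v ^ (c / 2) := by
  rw [CheegerStructure.normAt, Real.sqrt_eq_rpow, ← Real.rpow_mul (S.inn_nonneg x v),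
    one_div, inv_mul_eq_div]

end BilinearHelpers


section GradientHelpers

variable {X : Type*} [MetricSpace X] [MeasurableSpace X] [BorelSpace X] {p : ℝ} {μ : Measure X}

theorem curve_comp_aemeasurable {Y : Type*} [PseudoMetricSpace Y] [MeasurableSpace Y]
    [BorelSpace Y] (γ : Curve Y) (g : Y → ℝ≥0∞) (hg : Measurable g) :
    AEMeasurable (fun t => g (γ.toFun t)) (volume.restrict (Set.Icc 0 γ.l)) := by
  have hc : ContinuousOn γ.toFun (Set.Icc 0 γ.l) := γ.lip.continuousOn
  exact hg.comp_aemeasurable (hc.aemeasurable measurableSet_Icc)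

theorem curveIntegral_add_smul {Y : Type*} [PseudoMetricSpace Y] [MeasurableSpace Y]
    [BorelSpace Y] (γ : Curve Y) (g h : Y → ℝ≥0∞) (hg : Measurable g)
    (hh : Measurable h) (c : ℝ≥0∞) (hc : c ≠ ∞) :
    curveIntegral γ (fun y => g y + c * h y) =
      curveIntegral γ g + c * curveIntegral γ h := by
  unfold curveIntegral
  rw [lintegral_add_left' (curve_comp_aemeasurable γ g hg)]
  congr 1
  exact lintegral_const_mul' c _ hc

theorem isUpperGradient_add_smul {Y : Type*} [PseudoMetricSpace Y] [MeasurableSpace Y]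
    [BorelSpace Y] {u φ : Y → ℝ} {g h : Y → ℝ≥0∞} (t : ℝ)
    (hgu : IsUpperGradient u g) (hhφ : IsUpperGradient φ h) :
    IsUpperGradient (fun y => u y + t * φ y)
      (fun y => g y + ENNReal.ofReal |t| * h y) := by
  obtain ⟨hgm, hgc⟩ := hgu
  obtain ⟨hhm, hhc⟩ := hhφ
  refine ⟨hgm.add (measurable_const.mul hhm), fun γ => ?_⟩
  rw [curveIntegral_add_smul γ g h hgm hhm _ ENNReal.ofReal_ne_top]
  calc ENNReal.ofReal |u (γ.toFun 0) + t * φ (γ.toFun 0) -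
        (u (γ.toFun γ.l) + t * φ (γ.toFun γ.l))|
      ≤ ENNReal.ofReal (|u (γ.toFun 0) - u (γ.toFun γ.l)| +
          |t| * |φ (γ.toFun 0) - φ (γ.toFun γ.l)|) := by
        apply ENNReal.ofReal_le_ofReal
        have : u (γ.toFun 0) + t * φ (γ.toFun 0) - (u (γ.toFun γ.l) + t * φ (γ.toFun γ.l)) =
            (u (γ.toFun 0) - u (γ.toFun γ.l)) + t * (φ (γ.toFun 0) - φ (γ.toFun γ.l)) := by
          ring
        rw [this, ← abs_mul]
        exact abs_add_le _ _
    _ = ENNReal.ofReal |u (γ.toFun 0) - u (γ.toFun γ.l)| +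
          ENNReal.ofReal |t| * ENNReal.ofReal |φ (γ.toFun 0) - φ (γ.toFun γ.l)| := by
        rw [ENNReal.ofReal_add (abs_nonneg _) (by positivity), ENNReal.ofReal_mul (abs_nonneg t)]
    _ ≤ curveIntegral γ g + ENNReal.ofReal |t| * curveIntegral γ h := by
        exact add_le_add (hgc γ) (mul_le_mul_right (hhc γ) _)

theorem isWeakUpperGradient_of_isUpperGradient {Y : Type*} [PseudoMetricSpace Y]
    [MeasurableSpace Y] (hp : 0 < p) (μ : Measure Y) {f : Y → ℝ} {g : Y → ℝ≥0∞}
    (h : IsUpperGradient f g) : IsWeakUpperGradient p μ f g := by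
  refine ⟨h.1, ∅, ⟨fun _ => 0, measurable_const, ?_, fun γ hγ => absurd hγ (Set.notMem_empty γ)⟩,
    fun γ _ => h.2 γ⟩
  simp [ENNReal.zero_rpow_of_pos hp]

theorem ennreal_add_rpow_le (hp : 0 ≤ p) (a b : ℝ≥0∞) :
    (a + b) ^ p ≤ 2 ^ p * (a ^ p + b ^ p) := by
  have h1 : a + b ≤ 2 * max a b := by
    rw [two_mul]
    exact add_le_add (le_max_left a b) (le_max_right a b)
  calc (a + b) ^ p ≤ (2 * max a b) ^ p := ENNReal.rpow_le_rpow h1 hp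
    _ = 2 ^ p * max a b ^ p := ENNReal.mul_rpow_of_nonneg _ _ hp
    _ ≤ 2 ^ p * (a ^ p + b ^ p) := by
        apply mul_le_mul_right
        rcases max_cases a b with ⟨h, _⟩ | ⟨h, _⟩ <;> rw [h]
        · exact le_add_right le_rfl
        · exact le_add_left le_rfl

theorem memN1p_add_smul (hp : 0 < p) {u φ : X → ℝ} (t : ℝ)
    (hu : MemN1p p μ u) (hφ : MemN1p p μ φ) :
    MemN1p p μ (fun x => u x + t * φ x) := by
  obtain ⟨hum, huf, gu, hgu, hgue⟩ := hu
  obtain ⟨hφm, hφf, gφ, hgφ, hgφe⟩ := hφ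
  have h2p : (2:ℝ≥0∞) ^ p ≠ ∞ := ENNReal.rpow_ne_top_of_nonneg hp.le (by norm_num)
  have htp : ENNReal.ofReal |t| ^ p ≠ ∞ :=
    ENNReal.rpow_ne_top_of_nonneg hp.le ENNReal.ofReal_ne_top
  refine ⟨hum.add (measurable_const.mul hφm), ?_, ?_⟩
  · -- finiteness of the L^p part
    have hb : ∀ x, ENNReal.ofReal |u x + t * φ x| ^ p ≤
        2 ^ p * (ENNReal.ofReal |u x| ^ p +
          (ENNReal.ofReal |t| ^ p) * ENNReal.ofReal |φ x| ^ p) := by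
      intro x
      have h1 : ENNReal.ofReal |u x + t * φ x| ≤
          ENNReal.ofReal |u x| + ENNReal.ofReal |t| * ENNReal.ofReal |φ x| := by
        rw [← ENNReal.ofReal_mul (abs_nonneg t),
          ← ENNReal.ofReal_add (abs_nonneg _) (by positivity)]
        exact ENNReal.ofReal_le_ofReal ((abs_add_le _ _).trans (by rw [abs_mul]))
      calc ENNReal.ofReal |u x + t * φ x| ^ p
          ≤ (ENNReal.ofReal |u x| + ENNReal.ofReal |t| * ENNReal.ofReal |φ x|) ^ p :=
            ENNReal.rpow_le_rpow h1 hp.le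
        _ ≤ 2 ^ p * (ENNReal.ofReal |u x| ^ p +
              (ENNReal.ofReal |t| * ENNReal.ofReal |φ x|) ^ p) :=
            ennreal_add_rpow_le hp.le _ _
        _ = 2 ^ p * (ENNReal.ofReal |u x| ^ p +
              (ENNReal.ofReal |t| ^ p) * ENNReal.ofReal |φ x| ^ p) := by
            rw [ENNReal.mul_rpow_of_nonneg _ _ hp.le]
    have hle : (∫⁻ y, ENNReal.ofReal |u y + t * φ y| ^ p ∂μ) ≤
        2 ^ p * ((∫⁻ y, ENNReal.ofReal |u y| ^ p ∂μ) +
          (ENNReal.ofReal |t| ^ p) * ∫⁻ y, ENNReal.ofReal |φ y| ^ p ∂μ) := by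
      calc (∫⁻ y, ENNReal.ofReal |u y + t * φ y| ^ p ∂μ)
          ≤ ∫⁻ y, 2 ^ p * (ENNReal.ofReal |u y| ^ p +
              (ENNReal.ofReal |t| ^ p) * ENNReal.ofReal |φ y| ^ p) ∂μ :=
            lintegral_mono hb
        _ = 2 ^ p * ((∫⁻ y, ENNReal.ofReal |u y| ^ p ∂μ) +
              (ENNReal.ofReal |t| ^ p) * ∫⁻ y, ENNReal.ofReal |φ y| ^ p ∂μ) := by
            rw [lintegral_const_mul' _ _ h2p,
              lintegral_add_left'
                ((hum.abs.ennreal_ofReal.pow_const p).aemeasurable),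
              lintegral_const_mul' _ _ htp]
    intro hcon
    rw [hcon] at hle
    have : (2:ℝ≥0∞) ^ p * ((∫⁻ y, ENNReal.ofReal |u y| ^ p ∂μ) +
        (ENNReal.ofReal |t| ^ p) * ∫⁻ y, ENNReal.ofReal |φ y| ^ p ∂μ) ≠ ∞ := by
      exact ENNReal.mul_ne_top h2p
        (ENNReal.add_ne_top.2 ⟨huf, ENNReal.mul_ne_top htp hφf⟩)
    exact this (top_le_iff.mp hle)
  · refine ⟨fun y => gu y + ENNReal.ofReal |t| * gφ y,
      isUpperGradient_add_smul t hgu hgφ, ?_⟩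
    have hle : (∫⁻ y, (gu y + ENNReal.ofReal |t| * gφ y) ^ p ∂μ) ≤
        2 ^ p * ((∫⁻ y, gu y ^ p ∂μ) + (ENNReal.ofReal |t| ^ p) * ∫⁻ y, gφ y ^ p ∂μ) := by
      calc (∫⁻ y, (gu y + ENNReal.ofReal |t| * gφ y) ^ p ∂μ)
          ≤ ∫⁻ y, 2 ^ p * (gu y ^ p + (ENNReal.ofReal |t| ^ p) * gφ y ^ p) ∂μ := by
            apply lintegral_mono
            intro y
            calc (gu y + ENNReal.ofReal |t| * gφ y) ^ p
                ≤ 2 ^ p * (gu y ^ p + (ENNReal.ofReal |t| * gφ y) ^ p) :=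
                  ennreal_add_rpow_le hp.le _ _
              _ = 2 ^ p * (gu y ^ p + (ENNReal.ofReal |t| ^ p) * gφ y ^ p) := by
                  rw [ENNReal.mul_rpow_of_nonneg _ _ hp.le]
        _ = 2 ^ p * ((∫⁻ y, gu y ^ p ∂μ) + (ENNReal.ofReal |t| ^ p) * ∫⁻ y, gφ y ^ p ∂μ) := by
            rw [lintegral_const_mul' _ _ h2p,
              lintegral_add_left' ((hgu.1.pow_const p).aemeasurable),
              lintegral_const_mul' _ _ htp]
    intro hcon
    rw [hcon] at hle
    have : (2:ℝ≥0∞) ^ p * ((∫⁻ y, gu y ^ p ∂μ) +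
        (ENNReal.ofReal |t| ^ p) * ∫⁻ y, gφ y ^ p ∂μ) ≠ ∞ := by
      exact ENNReal.mul_ne_top h2p
        (ENNReal.add_ne_top.2 ⟨hgue, ENNReal.mul_ne_top htp hgφe⟩)
    exact this (top_le_iff.mp hle)

end GradientHelpers


section DerivHelpers

variable {X : Type*} [MetricSpace X] [MeasurableSpace X] {p : ℝ} {μ : Measure X}

theorem hasDerivAt_abs_rpow_mul (hp : 1 < p) (c t : ℝ) :
    HasDerivAt (fun s : ℝ => |s - t| ^ p * c) 0 t := by
  have hp0 : p ≠ 0 := by positivity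
  rw [hasDerivAt_iff_isLittleO]
  have hft : |t - t| ^ p * c = 0 := by
    simp [Real.zero_rpow hp0]
  rw [Asymptotics.isLittleO_iff]
  intro ε hε
  have h1 : Tendsto (fun s : ℝ => |s - t|) (𝓝 t) (𝓝 0) := by
    have := ((continuous_id.sub (continuous_const (y := t))).abs).tendsto t
    simpa using this
  have h2 : ContinuousAt (fun y : ℝ => y ^ (p - 1)) 0 :=
    Real.continuousAt_rpow_const 0 (p - 1) (Or.inr (by linarith))
  have h3 : Tendsto (fun s : ℝ => |s - t| ^ (p - 1)) (𝓝 t) (𝓝 0) := by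
    have := h2.tendsto.comp h1
    rwa [Real.zero_rpow (by intro h; linarith : p - 1 ≠ 0)] at this
  have h4 : Tendsto (fun s : ℝ => |s - t| ^ (p - 1) * |c|) (𝓝 t) (𝓝 0) := by
    simpa using h3.mul_const |c|
  filter_upwards [h4.eventually_lt_const hε] with s hs
  rw [hft, smul_zero, sub_zero, sub_zero]
  by_cases hst : s = t
  · simp [hst, Real.zero_rpow hp0]
  · have hpos : 0 < |s - t| := abs_pos.2 (sub_ne_zero.2 hst)
    have hsplit : |s - t| ^ p = |s - t| ^ (p - 1) * |s - t| := by
      have h := Real.rpow_add hpos (p - 1) 1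
      rw [sub_add_cancel] at h
      simpa [Real.rpow_one] using h
    calc ‖|s - t| ^ p * c‖ = (|s - t| ^ (p - 1) * |c|) * |s - t| := by
          rw [Real.norm_eq_abs, abs_mul, abs_of_nonneg (Real.rpow_nonneg (abs_nonneg _) p),
            hsplit]
          ring
      _ ≤ ε * ‖s - t‖ := by
          rw [Real.norm_eq_abs]
          exact mul_le_mul_of_nonneg_right hs.le (abs_nonneg _)

theorem hasDerivAt_normAt_rpow (S : CheegerStructure X p μ) (hp : 1 < p) (x : X)
    (A B : Fin S.N → ℝ) (t : ℝ) :
    HasDerivAt (fun s => S.normAt x (A + s • B) ^ p)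
      (p * S.inn x (A + t • B) (A + t • B) ^ ((p - 2) / 2) * S.inn x (A + t • B) B) t := by
  have hfun : (fun s => S.normAt x (A + s • B) ^ p) =
      fun s => (S.inn x A A + 2 * s * S.inn x A B + s ^ 2 * S.inn x B B) ^ (p / 2) := by
    funext s; rw [normAt_rpow, inn_expand]
  have hq : ∀ s : ℝ, S.inn x (A + s • B) (A + s • B) =
      S.inn x A A + 2 * s * S.inn x A B + s ^ 2 * S.inn x B B := fun s => inn_expand S x A B s
  have hqnn : ∀ s : ℝ, 0 ≤ S.inn x A A + 2 * s * S.inn x A B + s ^ 2 * S.inn x B B :=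
    fun s => (hq s) ▸ S.inn_nonneg x (A + s • B)
  have hql : HasDerivAt (fun s : ℝ => S.inn x A A + 2 * s * S.inn x A B + s ^ 2 * S.inn x B B)
      (2 * S.inn x A B + 2 * t * S.inn x B B) t := by
    have h2 : HasDerivAt (fun s : ℝ => 2 * s * S.inn x A B) (2 * S.inn x A B) t := by
      simpa using ((hasDerivAt_id t).const_mul 2).mul_const (S.inn x A B)
    have h3 : HasDerivAt (fun s : ℝ => s ^ 2 * S.inn x B B) (2 * t * S.inn x B B) t := by
      have := (hasDerivAt_pow 2 t).mul_const (S.inn x B B)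
      rw [show 2 * t * S.inn x B B = ((2:ℕ):ℝ) * t ^ (2 - 1) * S.inn x B B by norm_num]; exact this
    have := (h2.add h3).const_add (S.inn x A A)
    refine this.congr_of_eventuallyEq (Filter.Eventually.of_forall fun s => ?_)
    simp only [Pi.add_apply]
    ring
  have hinnB : S.inn x (A + t • B) B = S.inn x A B + t * S.inn x B B :=
    inn_add_smul_right S x A B t
  rw [hfun]
  rcases (hqnn t).lt_or_eq with hpos | hzero
  · -- positive case
    have H := hql.rpow_const (p := p / 2) (Or.inl (ne_of_gt hpos))
    rw [← hq t] at H
    convert H using 1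
    rw [hq t, hinnB]
    rw [show p / 2 - 1 = (p - 2) / 2 by ring]
    ring
  · -- q t = 0 case
    have hqt : S.inn x (A + t • B) (A + t • B) = 0 := by rw [hq t, ← hzero]
    have hIB : S.inn x (A + t • B) B = 0 := by
      have hcs := inn_cauchy_schwarz S x (A + t • B) B
      rw [hqt, zero_mul] at hcs
      nlinarith [hcs, sq_nonneg (S.inn x (A + t • B) B)]
    have htarget : p * S.inn x (A + t • B) (A + t • B) ^ ((p - 2) / 2) *
        S.inn x (A + t • B) B = 0 := by rw [hIB, mul_zero]
    rw [htarget]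
    -- rewrite the function as |s - t| ^ p * (inn B B) ^ (p/2)
    have hfun2 : (fun s : ℝ => (S.inn x A A + 2 * s * S.inn x A B +
        s ^ 2 * S.inn x B B) ^ (p / 2)) =
        fun s : ℝ => |s - t| ^ p * S.inn x B B ^ (p / 2) := by
      funext s
      have hcoef : S.inn x A A + 2 * s * S.inn x A B + s ^ 2 * S.inn x B B =
          (s - t) ^ 2 * S.inn x B B := by
        have h0 : S.inn x A A + 2 * t * S.inn x A B + t ^ 2 * S.inn x B B = 0 := hzero.symm
        have h1 : S.inn x A B + t * S.inn x B B = 0 := hinnB ▸ hIB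
        linear_combination h0 + (2 * s - 2 * t) * h1
      rw [hcoef, Real.mul_rpow (sq_nonneg _) (S.inn_nonneg x B), ← sq_abs,
        ← Real.rpow_natCast |s - t| 2, ← Real.rpow_mul (abs_nonneg _),
        show ((2:ℕ):ℝ) * (p / 2) = p by push_cast; ring]
    rw [hfun2]
    exact hasDerivAt_abs_rpow_mul hp _ t

end DerivHelpers


section EnergyHelpers

variable {X : Type*} [MetricSpace X] [MeasurableSpace X] {p : ℝ} {μ : Measure X}

theorem cheeger_integrand_le (S : CheegerStructure X p μ) (hp : 0 < p) {f : X → ℝ}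
    {g : X → ℝ≥0∞} (h2 : ∀ᵐ x ∂μ, ENNReal.ofReal (Real.sqrt (S.inn x (S.D f x) (S.D f x))) ≤
      ENNReal.ofReal C * g x) :
    ∀ᵐ x ∂μ, ENNReal.ofReal (S.normAt x (S.D f x) ^ p) ≤ (ENNReal.ofReal C * g x) ^ p := by
  filter_upwards [h2] with x hx
  rw [← ENNReal.ofReal_rpow_of_nonneg (normAt_nonneg S x _) hp.le]
  exact ENNReal.rpow_le_rpow hx hp.le

theorem cheegerEnergy_restrict_ne_top (S : CheegerStructure X p μ) (hp : 0 < p)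
    {f : X → ℝ} (hf : MemN1p p μ f) {g : X → ℝ≥0∞} (hg : IsWeakUpperGradient p μ f g)
    (hge : (∫⁻ y, g y ^ p ∂μ) ≠ ∞) (s : Set X) :
    (∫⁻ x in s, ENNReal.ofReal (S.normAt x (S.D f x) ^ p) ∂μ) ≠ ∞ := by
  obtain ⟨C, hC, hcomp⟩ := S.comparable
  have h2 := (hcomp f hf).2 g hg
  have hb := cheeger_integrand_le S hp h2
  have hle : (∫⁻ x in s, ENNReal.ofReal (S.normAt x (S.D f x) ^ p) ∂μ) ≤
      ENNReal.ofReal C ^ p * ∫⁻ y, g y ^ p ∂μ := by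
    calc (∫⁻ x in s, ENNReal.ofReal (S.normAt x (S.D f x) ^ p) ∂μ)
        ≤ ∫⁻ x in s, (ENNReal.ofReal C * g x) ^ p ∂μ :=
          lintegral_mono_ae (ae_restrict_of_ae hb)
      _ ≤ ∫⁻ x, (ENNReal.ofReal C * g x) ^ p ∂μ := setLIntegral_le_lintegral s _
      _ = ENNReal.ofReal C ^ p * ∫⁻ y, g y ^ p ∂μ := by
          simp_rw [ENNReal.mul_rpow_of_nonneg _ _ hp.le]
          exact lintegral_const_mul' _ _
            (ENNReal.rpow_ne_top_of_nonneg hp.le ENNReal.ofReal_ne_top)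
  intro hcon
  rw [hcon, top_le_iff] at hle
  exact (ENNReal.mul_ne_top (ENNReal.rpow_ne_top_of_nonneg hp.le ENNReal.ofReal_ne_top) hge) hle

end EnergyHelpers

/-- The capacitary measure `ν_E = T u_E` of `E ⊆ Ω` annihilates `N^{1,p}_0(Ω \ E)`:
`∫_Ω φ dν_E = 0` for every `φ ∈ N^{1,p}_0(Ω \ E)`. -/

theorem capacitary_measure_annihilates
    {X : Type*} [MetricSpace X] [MeasurableSpace X] [BorelSpace X] [CompleteSpace X]
    (p : ℝ) (hp : 1 < p) (μ : Measure X)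
    (hμ : IsDoubling μ) (hPI : SupportsPoincare p μ)
    (S : CheegerStructure X p μ)
    (Ω : Set X) (hΩo : IsOpen Ω) (hΩne : Ω.Nonempty) (hΩb : Bornology.IsBounded Ω)
    (hΩc : 0 < sobolevCapacity p μ Ωᶜ)
    (E : Set X) (hE : E ⊆ Ω) (hcap : varCap p μ E Ω ≠ ∞)
    (uE : X → ℝ) (huE : IsCapacitaryPotential S E Ω uE)
    (ν : Measure X) (hν : IsCapacitaryMeasure S Ω uE ν) :
    ∀ φ : X → ℝ, MemN1p0 p μ (Ω \ E) φ → ∫ x, φ x ∂ν = 0 := by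
  intro φ hφ0
  obtain ⟨hφN, hφzero⟩ := hφ0
  have hp0 : (0:ℝ) < p := lt_trans one_pos hp
  have hφΩ : MemN1p0 p μ Ω φ := ⟨hφN, fun x hx => hφzero x (fun h => hx h.1)⟩
  rw [← hν.2 φ hφΩ]
  obtain ⟨huN0, huQe, hulsc, humin⟩ := huE
  have huN : MemN1p p μ uE := huN0.1
  have huMeas : Measurable uE := huN.1
  have hφMeas : Measurable φ := hφN.1
  have hφE : ∀ x ∈ E, φ x = 0 := fun x hx => hφzero x (fun h => h.2 hx)
  -- competitors
  have hcompt : ∀ t : ℝ, MemN1p0 p μ Ω (fun x => uE x + t * φ x) := fun t =>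
    ⟨memN1p_add_smul hp0 t huN hφN, fun x hx => by
      show uE x + t * φ x = 0
      rw [huN0.2 x hx, hφΩ.2 x hx, mul_zero, add_zero]⟩
  have hQe : ∀ t : ℝ, QeOn p μ E fun x => 1 ≤ uE x + t * φ x := by
    intro t
    unfold QeOn
    have hset : {x ∈ E | ¬ 1 ≤ uE x + t * φ x} = {x ∈ E | ¬ 1 ≤ uE x} := by
      ext x
      simp only [Set.mem_setOf_eq, and_congr_right_iff]
      intro hx
      rw [hφE x hx, mul_zero, add_zero]
    rw [hset]
    exact huQe
  have hmin : ∀ t : ℝ, cheegerEnergy S Ω uE ≤ cheegerEnergy S Ω (fun x => uE x + t * φ x) :=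
    fun t => humin _ (hcompt t) (hQe t)
  -- Cheeger gradient of the competitor
  have hD : ∀ t : ℝ, S.D (fun x => uE x + t * φ x) = fun x => S.D uE x + t • S.D φ x := by
    intro t
    have h1 : (fun x => uE x + t * φ x) = uE + fun x => t * φ x := rfl
    rw [h1, S.D_add]
    funext x
    rw [S.D_smul t φ]
  -- notation
  set Fμ := μ.restrict Ω with hFμ
  set f : ℝ → X → ℝ := fun t x => S.normAt x (S.D uE x + t • S.D φ x) ^ p with hf
  set f' : ℝ → X → ℝ := fun t x =>
    p * S.inn x (S.D uE x + t • S.D φ x) (S.D uE x + t • S.D φ x) ^ ((p - 2) / 2) *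
      S.inn x (S.D uE x + t • S.D φ x) (S.D φ x) with hf'
  set F : ℝ → ℝ≥0∞ := fun t => ∫⁻ x, ENNReal.ofReal (f t x) ∂Fμ with hFdef
  have hFen : ∀ t : ℝ, cheegerEnergy S Ω (fun x => uE x + t * φ x) = F t := by
    intro t
    unfold cheegerEnergy
    simp only [hD t]
    rfl
  have hu0 : (fun x => uE x + 0 * φ x) = uE := by funext x; ring
  have hminF : ∀ t : ℝ, F 0 ≤ F t := by
    intro t
    have := hmin t
    rw [hFen t, ← hu0, hFen 0] at this
    exact this
  -- measurability helpers
  have hw : ∀ t : ℝ, Measurable (fun x => uE x + t * φ x) := fun t =>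
    huMeas.add (measurable_const.mul hφMeas)
  have hQt : ∀ t : ℝ,
      Measurable (fun x => S.inn x (S.D uE x + t • S.D φ x) (S.D uE x + t • S.D φ x)) := by
    intro t
    have h := S.measurable_inn_D _ _ (hw t) (hw t)
    simpa only [hD t] using h
  have hMix : ∀ t : ℝ,
      Measurable (fun x => S.inn x (S.D uE x + t • S.D φ x) (S.D φ x)) := by
    intro t
    have h := S.measurable_inn_D _ φ (hw t) hφMeas
    simpa only [hD t] using h
  have hfmeas : ∀ t : ℝ, Measurable (f t) := fun t =>
    ((hQt t).sqrt).pow_const p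
  have hf'meas : ∀ t : ℝ, Measurable (f' t) := fun t =>
    (measurable_const.mul ((hQt t).pow_const _)).mul (hMix t)
  -- gradient norms
  set nA : X → ℝ := fun x => S.normAt x (S.D uE x) with hnA
  set nB : X → ℝ := fun x => S.normAt x (S.D φ x) with hnB
  have hnAmeas : Measurable nA := (S.measurable_inn_D uE uE huMeas huMeas).sqrt
  have hnBmeas : Measurable nB := (S.measurable_inn_D φ φ hφMeas hφMeas).sqrt
  have hnAnn : ∀ x, 0 ≤ nA x := fun x => normAt_nonneg S x _
  have hnBnn : ∀ x, 0 ≤ nB x := fun x => normAt_nonneg S x _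
  -- pointwise triangle bound
  have htri : ∀ (t : ℝ) (x : X), |t| ≤ 1 →
      S.normAt x (S.D uE x + t • S.D φ x) ≤ nA x + nB x := by
    intro t x ht
    calc S.normAt x (S.D uE x + t • S.D φ x)
        ≤ S.normAt x (S.D uE x) + S.normAt x (t • S.D φ x) := normAt_add_le S x _ _
      _ = nA x + |t| * nB x := by rw [normAt_smul]
      _ ≤ nA x + nB x := by
          have := hnBnn x
          nlinarith
  have hfb : ∀ (t : ℝ) (x : X), |t| ≤ 1 → f t x ≤ (nA x + nB x) ^ p :=
    fun t x ht => Real.rpow_le_rpow (normAt_nonneg S x _) (htri t x ht) hp0.le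
  have hfnn : ∀ (t : ℝ) (x : X), 0 ≤ f t x :=
    fun t x => Real.rpow_nonneg (normAt_nonneg S x _) p
  -- pointwise derivative bound
  have hf'b : ∀ (t : ℝ) (x : X), |t| ≤ 1 → |f' t x| ≤ p * (nA x + nB x) ^ p := by
    intro t x ht
    set q := S.inn x (S.D uE x + t • S.D φ x) (S.D uE x + t • S.D φ x) with hqdef
    have hqnn : 0 ≤ q := S.inn_nonneg x _
    have hrnn : 0 ≤ nA x + nB x := add_nonneg (hnAnn x) (hnBnn x)
    have hrpnn : 0 ≤ (nA x + nB x) ^ p := Real.rpow_nonneg hrnn p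
    rcases hqnn.lt_or_eq with hqpos | hqzero
    · -- q > 0
      have hIB : |S.inn x (S.D uE x + t • S.D φ x) (S.D φ x)| ≤ Real.sqrt q * nB x :=
        abs_inn_le S x _ _
      have hr : 0 < nA x + nB x := by
        by_contra hcon
        push_neg at hcon
        have hr0 : nA x + nB x = 0 := le_antisymm hcon hrnn
        have h1 : Real.sqrt q ≤ 0 := hr0 ▸ htri t x ht
        have h2 : Real.sqrt q = 0 := le_antisymm h1 (Real.sqrt_nonneg q)
        have h3 : q ≤ 0 := Real.sqrt_eq_zero'.1 h2
        linarith
      have hq12 : q ^ ((p - 2) / 2) * Real.sqrt q = q ^ ((p - 1) / 2) := by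
        rw [Real.sqrt_eq_rpow, ← Real.rpow_add hqpos,
          show (p - 2) / 2 + 1 / 2 = (p - 1) / 2 by ring]
      have hqle : q ^ ((p - 1) / 2) ≤ (nA x + nB x) ^ (p - 1) := by
        have h1 : S.normAt x (S.D uE x + t • S.D φ x) ^ (p - 1) = q ^ ((p - 1) / 2) := by
          rw [normAt_rpow, ← hqdef]
        rw [← h1]
        exact Real.rpow_le_rpow (normAt_nonneg S x _) (htri t x ht) (by linarith)
      have habs : |f' t x| = p * q ^ ((p - 2) / 2) *
          |S.inn x (S.D uE x + t • S.D φ x) (S.D φ x)| := by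
        simp only [hf']
        rw [abs_mul, abs_mul, abs_of_nonneg hp0.le,
          abs_of_nonneg (Real.rpow_nonneg hqnn _)]
      rw [habs]
      calc p * q ^ ((p - 2) / 2) * |S.inn x (S.D uE x + t • S.D φ x) (S.D φ x)|
          ≤ p * q ^ ((p - 2) / 2) * (Real.sqrt q * nB x) :=
            mul_le_mul_of_nonneg_left hIB (by positivity)
        _ = p * (q ^ ((p - 2) / 2) * Real.sqrt q) * nB x := by ring
        _ = p * q ^ ((p - 1) / 2) * nB x := by rw [hq12]
        _ ≤ p * (nA x + nB x) ^ (p - 1) * nB x :=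
            mul_le_mul_of_nonneg_right (mul_le_mul_of_nonneg_left hqle hp0.le) (hnBnn x)
        _ ≤ p * (nA x + nB x) ^ (p - 1) * (nA x + nB x) := by
            apply mul_le_mul_of_nonneg_left (by nlinarith [hnAnn x]) (by positivity)
        _ = p * (nA x + nB x) ^ p := by
            rw [mul_assoc, ← Real.rpow_add_one (ne_of_gt hr) (p - 1), sub_add_cancel]
    · -- q = 0
      have hIB0 : S.inn x (S.D uE x + t • S.D φ x) (S.D φ x) = 0 := by
        have hcs := inn_cauchy_schwarz S x (S.D uE x + t • S.D φ x) (S.D φ x)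
        rw [← hqdef, ← hqzero, zero_mul] at hcs
        nlinarith [sq_nonneg (S.inn x (S.D uE x + t • S.D φ x) (S.D φ x))]
      have : f' t x = 0 := by
        rw [hf']
        simp only [← hqdef, hIB0, mul_zero]
      rw [this, abs_zero]
      positivity
  -- finiteness of the uE energy
  have h2p : (2:ℝ≥0∞) ^ p ≠ ∞ := ENNReal.rpow_ne_top_of_nonneg hp0.le (by norm_num)
  have hvarlt : varCap p μ E Ω < ∞ := lt_top_iff_ne_top.2 hcap
  rw [varCap] at hvarlt
  simp only [iInf_lt_iff] at hvarlt
  obtain ⟨v, hv0, hvE, hvlt⟩ := hvarlt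
  rw [weakGradEnergy] at hvlt
  simp only [iInf_lt_iff] at hvlt
  obtain ⟨gv, hgv, hgvlt⟩ := hvlt
  have hEv : cheegerEnergy S Ω v ≠ ∞ :=
    cheegerEnergy_restrict_ne_top S hp0 hv0.1 hgv hgvlt.ne Ω
  have hEuE : (∫⁻ x, ENNReal.ofReal (nA x ^ p) ∂Fμ) ≠ ∞ := by
    intro hcon
    have h1 : cheegerEnergy S Ω uE ≤ cheegerEnergy S Ω v :=
      humin v hv0 (qeOn_of_forall hp0 hvE)
    have h2 : cheegerEnergy S Ω uE = ∫⁻ x, ENNReal.ofReal (nA x ^ p) ∂Fμ := rfl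
    rw [h2, hcon, top_le_iff] at h1
    exact hEv h1
  -- finiteness of the φ energy
  obtain ⟨gφ, hgφ, hgφe⟩ := hφN.2.2
  have hEφ : (∫⁻ x, ENNReal.ofReal (nB x ^ p) ∂Fμ) ≠ ∞ :=
    cheegerEnergy_restrict_ne_top S hp0 hφN
      (isWeakUpperGradient_of_isUpperGradient hp0 μ hgφ) hgφe Ω
  -- the integrable dominating bound
  have hrb : ∀ x, ENNReal.ofReal ((nA x + nB x) ^ p) ≤
      2 ^ p * (ENNReal.ofReal (nA x ^ p) + ENNReal.ofReal (nB x ^ p)) := by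
    intro x
    rw [← ENNReal.ofReal_rpow_of_nonneg (add_nonneg (hnAnn x) (hnBnn x)) hp0.le,
      ENNReal.ofReal_add (hnAnn x) (hnBnn x),
      ← ENNReal.ofReal_rpow_of_nonneg (hnAnn x) hp0.le,
      ← ENNReal.ofReal_rpow_of_nonneg (hnBnn x) hp0.le]
    exact ennreal_add_rpow_le hp0.le _ _
  have hrint : (∫⁻ x, ENNReal.ofReal ((nA x + nB x) ^ p) ∂Fμ) ≠ ∞ := by
    have hle : (∫⁻ x, ENNReal.ofReal ((nA x + nB x) ^ p) ∂Fμ) ≤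
        2 ^ p * ((∫⁻ x, ENNReal.ofReal (nA x ^ p) ∂Fμ) +
          ∫⁻ x, ENNReal.ofReal (nB x ^ p) ∂Fμ) := by
      calc (∫⁻ x, ENNReal.ofReal ((nA x + nB x) ^ p) ∂Fμ)
          ≤ ∫⁻ x, 2 ^ p * (ENNReal.ofReal (nA x ^ p) + ENNReal.ofReal (nB x ^ p)) ∂Fμ :=
            lintegral_mono hrb
        _ = 2 ^ p * ((∫⁻ x, ENNReal.ofReal (nA x ^ p) ∂Fμ) +
              ∫⁻ x, ENNReal.ofReal (nB x ^ p) ∂Fμ) := by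
            rw [lintegral_const_mul' _ _ h2p,
              lintegral_add_left' (((hnAmeas.pow_const p).ennreal_ofReal).aemeasurable)]
    intro hcon
    rw [hcon, top_le_iff] at hle
    exact (ENNReal.mul_ne_top h2p (ENNReal.add_ne_top.2 ⟨hEuE, hEφ⟩)) hle
  -- F is finite near 0
  have hFle : ∀ t : ℝ, |t| ≤ 1 →
      F t ≤ ∫⁻ x, ENNReal.ofReal ((nA x + nB x) ^ p) ∂Fμ := fun t ht =>
    lintegral_mono fun x => ENNReal.ofReal_le_ofReal (hfb t x ht)
  have hFne : ∀ t : ℝ, |t| ≤ 1 → F t ≠ ∞ := fun t ht =>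
    fun hcon => hrint (top_le_iff.1 (hcon ▸ hFle t ht))
  -- real-valued energies
  set G : ℝ → ℝ := fun t => ∫ x, f t x ∂Fμ with hG
  have hGF : ∀ t : ℝ, G t = (F t).toReal := by
    intro t
    rw [hG]
    exact integral_eq_lintegral_of_nonneg_ae (Filter.Eventually.of_forall (hfnn t))
      ((hfmeas t).aestronglyMeasurable)
  have hGmono : ∀ t : ℝ, |t| ≤ 1 → G 0 ≤ G t := by
    intro t ht
    rw [hGF 0, hGF t]
    exact (ENNReal.toReal_le_toReal (hFne 0 (by norm_num)) (hFne t ht)).2 (hminF t)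
  -- integrability of the bound and of f 0
  have hbound_int : Integrable (fun x => p * (nA x + nB x) ^ p) Fμ := by
    refine ⟨(measurable_const.mul ((hnAmeas.add hnBmeas).pow_const p)).aestronglyMeasurable, ?_⟩
    rw [hasFiniteIntegral_iff_ofReal (Filter.Eventually.of_forall fun x =>
      mul_nonneg hp0.le (Real.rpow_nonneg (add_nonneg (hnAnn x) (hnBnn x)) p))]
    have heq : (∫⁻ x, ENNReal.ofReal (p * (nA x + nB x) ^ p) ∂Fμ) =
        ENNReal.ofReal p * ∫⁻ x, ENNReal.ofReal ((nA x + nB x) ^ p) ∂Fμ := by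
      simp_rw [ENNReal.ofReal_mul hp0.le]
      exact lintegral_const_mul' _ _ ENNReal.ofReal_ne_top
    rw [heq]
    exact lt_top_iff_ne_top.2 (ENNReal.mul_ne_top ENNReal.ofReal_ne_top hrint)
  have hf0int : Integrable (f 0) Fμ := by
    refine ⟨(hfmeas 0).aestronglyMeasurable, ?_⟩
    rw [hasFiniteIntegral_iff_ofReal (Filter.Eventually.of_forall (hfnn 0))]
    exact lt_top_iff_ne_top.2 (hFne 0 (by norm_num))
  -- differentiation under the integral sign
  have hball : ∀ t : ℝ, t ∈ Metric.ball (0:ℝ) 1 → |t| ≤ 1 := by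
    intro t htb
    have := mem_ball_zero_iff.1 htb
    rw [Real.norm_eq_abs] at this
    exact this.le
  have hder := hasDerivAt_integral_of_dominated_loc_of_deriv_le
    (μ := Fμ) (F := f) (F' := f') (x₀ := (0:ℝ))
    (bound := fun x => p * (nA x + nB x) ^ p) (Metric.ball_mem_nhds 0 one_pos)
    (Filter.Eventually.of_forall fun t => (hfmeas t).aestronglyMeasurable)
    hf0int
    ((hf'meas 0).aestronglyMeasurable)
    (Filter.Eventually.of_forall fun x t htb => by
      rw [Real.norm_eq_abs]
      exact hf'b t x (hball t htb))
    hbound_int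
    (Filter.Eventually.of_forall fun x t _ =>
      hasDerivAt_normAt_rpow S hp x (S.D uE x) (S.D φ x) t)
  -- local minimum at 0
  have hlm : IsLocalMin G 0 := by
    have hballn : Metric.ball (0:ℝ) 1 ∈ 𝓝 (0:ℝ) := Metric.ball_mem_nhds 0 one_pos
    exact Filter.eventually_of_mem hballn fun t htb => hGmono t (hball t htb)
  have hzero : (∫ x, f' 0 x ∂Fμ) = 0 := hlm.hasDerivAt_eq_zero hder.2
  -- identify the derivative with p * cheegerForm
  have hf'0 : ∀ x, f' 0 x =
      p * (S.normAt x (S.D uE x) ^ (p - 2) * S.inn x (S.D uE x) (S.D φ x)) := by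
    intro x
    simp only [hf', zero_smul, add_zero]
    rw [normAt_rpow]
    ring
  have hform : (∫ x, f' 0 x ∂Fμ) = p * cheegerForm S Ω uE φ := by
    unfold cheegerForm
    calc (∫ x, f' 0 x ∂Fμ)
        = ∫ x, p * (S.normAt x (S.D uE x) ^ (p - 2) * S.inn x (S.D uE x) (S.D φ x)) ∂Fμ :=
          integral_congr_ae (Filter.Eventually.of_forall hf'0)
      _ = p * ∫ x, S.normAt x (S.D uE x) ^ (p - 2) * S.inn x (S.D uE x) (S.D φ x) ∂Fμ :=
          integral_const_mul p _
  rw [hform] at hzero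
  rcases mul_eq_zero.1 hzero with h | h
  · exact absurd h (ne_of_gt hp0)
  · exact h

end FinePotential
end
end

section
/- Let U ⊂ X be quasiopen. Then U = W₁ ∪ E₁ = W₂ ∖ E₂, where W₁ is a Borel set of type F_σ, W₂ is a Borel set of type G_δ, and C_p(E₁) = C_p(E₂) = 0. -/
open MeasureTheory Metric Set Filter Topology
open scoped ENNReal NNReal

noncomputable section

namespace FinePotential

/-- Monotonicity of the Sobolev capacity. -/
lemma sobolevCapacity_mono {Y : Type*} [PseudoMetricSpace Y] [MeasurableSpace Y]
    {p : ℝ} {μ : Measure Y} {E G : Set Y} (h : E ⊆ G) :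
    sobolevCapacity p μ E ≤ sobolevCapacity p μ G := by
  refine iInf_mono fun f => iInf_mono fun hf => ?_
  exact le_iInf fun hG => iInf_le _ (fun x hx => hG x (h hx))

/-- If a quantity is below `(n+1)⁻¹` for every `n`, it is zero. -/
lemma ennreal_eq_zero_of_forall_le_inv {a : ℝ≥0∞}
    (h : ∀ n : ℕ, a ≤ ((n : ℝ≥0∞) + 1)⁻¹) : a = 0 := by
  by_contra ha
  obtain ⟨n, hn⟩ := ENNReal.exists_inv_nat_lt ha
  have h1 : a ≤ ((n : ℝ≥0∞) + 1)⁻¹ := h n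
  have h2 : ((n : ℝ≥0∞) + 1)⁻¹ ≤ ((n : ℝ≥0∞))⁻¹ :=
    ENNReal.inv_le_inv.2 (le_add_of_nonneg_right zero_le_one)
  exact absurd (h1.trans h2) (not_le.2 hn)

/-- In a metric space, every open set is a countable union of closed sets. -/
lemma isOpen_eq_iUnion_closed {Y : Type*} [MetricSpace Y] {V : Set Y} (hV : IsOpen V) :
    ∃ F : ℕ → Set Y, (∀ n, IsClosed (F n)) ∧ V = ⋃ n, F n := by
  obtain ⟨O, hO, hOeq⟩ := (hV.isClosed_compl.isGδ).eq_iInter_nat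
  refine ⟨fun n => (O n)ᶜ, fun n => (hO n).isClosed_compl, ?_⟩
  rw [← Set.compl_iInter, ← hOeq, compl_compl]

/-- Every quasiopen set `U` can be written as `U = W₁ ∪ E₁ = W₂ \ E₂`, where `W₁` is
an `F_σ` (Borel) set, `W₂` is a `G_δ` (Borel) set, and `C_p(E₁) = C_p(E₂) = 0`. -/
theorem quasiopen_borel_decomposition
    {X : Type*} [MetricSpace X] [MeasurableSpace X] [BorelSpace X] [CompleteSpace X]
    (p : ℝ) (hp : 1 < p) (μ : Measure X)
    (hμ : IsDoubling μ) (hPI : SupportsPoincare p μ)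
    (U : Set X) (hU : Quasiopen p μ U) :
    ∃ W₁ E₁ W₂ E₂ : Set X,
      (∃ F : ℕ → Set X, (∀ n, IsClosed (F n)) ∧ W₁ = ⋃ n, F n) ∧
      IsGδ W₂ ∧
      sobolevCapacity p μ E₁ = 0 ∧ sobolevCapacity p μ E₂ = 0 ∧
      U = W₁ ∪ E₁ ∧ U = W₂ \ E₂ := by
  -- choose open sets `G n` with small capacity such that `G n ∪ U` is open
  have hex : ∀ n : ℕ, ∃ G : Set X, IsOpen G ∧
      sobolevCapacity p μ G < ((n : ℝ≥0∞) + 1)⁻¹ ∧ IsOpen (G ∪ U) := by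
    intro n
    refine hU (((n : ℝ≥0∞) + 1)⁻¹) ?_
    simp [ENNReal.inv_pos]
  choose G hGopen hGcap hGUopen using hex
  -- F_σ part
  have hFσ : ∀ n : ℕ, ∃ F : ℕ → Set X, (∀ k, IsClosed (F k)) ∧ G n ∪ U = ⋃ k, F k :=
    fun n => isOpen_eq_iUnion_closed (hGUopen n)
  choose F hFclosed hFeq using hFσ
  set W₁ : Set X := ⋃ n, ⋃ k, (F n k ∩ (G n)ᶜ) with hW₁
  set E₁ : Set X := U \ W₁ with hE₁
  set W₂ : Set X := ⋂ n, (G n ∪ U) with hW₂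
  set E₂ : Set X := W₂ \ U with hE₂
  have hW₁U : W₁ ⊆ U := by
    refine Set.iUnion_subset fun n => Set.iUnion_subset fun k => ?_
    intro x hx
    have hx1 : x ∈ G n ∪ U := (hFeq n).symm ▸ Set.mem_iUnion.2 ⟨k, hx.1⟩
    exact hx1.resolve_left hx.2
  have hE₁sub : ∀ n, E₁ ⊆ G n := by
    intro n x hx
    by_contra hxG
    have hxU : x ∈ G n ∪ U := Or.inr hx.1
    rw [hFeq n] at hxU
    obtain ⟨k, hk⟩ := Set.mem_iUnion.1 hxU
    exact hx.2 (Set.mem_iUnion.2 ⟨n, Set.mem_iUnion.2 ⟨k, ⟨hk, hxG⟩⟩⟩)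
  have hE₂sub : ∀ n, E₂ ⊆ G n := by
    intro n x hx
    have : x ∈ G n ∪ U := Set.mem_iInter.1 hx.1 n
    exact this.resolve_right hx.2
  refine ⟨W₁, E₁, W₂, E₂, ?_, ?_, ?_, ?_, ?_, ?_⟩
  · -- W₁ is F_σ: reindex the double union over ℕ × ℕ by ℕ
    refine ⟨fun m => F m.unpair.1 m.unpair.2 ∩ (G m.unpair.1)ᶜ, ?_, ?_⟩
    · exact fun m => (hFclosed _ _).inter (hGopen _).isClosed_compl
    · exact (Set.iUnion_unpair fun n k => F n k ∩ (G n)ᶜ).symm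
  · exact IsGδ.iInter_of_isOpen hGUopen
  · exact ennreal_eq_zero_of_forall_le_inv fun n =>
      (sobolevCapacity_mono (hE₁sub n)).trans (hGcap n).le
  · exact ennreal_eq_zero_of_forall_le_inv fun n =>
      (sobolevCapacity_mono (hE₂sub n)).trans (hGcap n).le
  · rw [hE₁, Set.union_diff_self, Set.union_eq_self_of_subset_left hW₁U]
  · have hUW₂ : U ⊆ W₂ := Set.subset_iInter fun n => Set.subset_union_right
    rw [hE₂, Set.diff_diff_right, Set.diff_self, Set.empty_union,
      Set.inter_eq_self_of_subset_right hUW₂]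


end FinePotential
end
end
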